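/- Let d ≥ 1 and let 0 ≤ i < j ≤ d and i ≤ k ≤ j be integers. Then there exists a set S of vertices of the Boolean hypercube {0,1}^d, each of Hamming weight k, with |S| ≤ ⌈3d·C(d,k)/C(j−i,k−i)⌉, such that for every pair of vertices x, y ∈ {0,1}^d with |x| = i, |y| = j and x ≺ y, there exists v ∈ S with x ≼ v ≼ y. Here C(a,b) denotes the binomial coefficient. -/

import Mathlib

/-- Hamming weight of a Boolean vector. -/
def hammingWeight {d : ℕ} (x : Fin d → Bool) : ℕ :=
  (Finset.univ.filter fun t => x t = true).card

/-- The coordinatewise partial order on the Boolean hypercube. -/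
def cubeLe {d : ℕ} (x y : Fin d → Bool) : Prop :=
  ∀ t, x t = true → y t = true

/-- For `0 ≤ i < j ≤ d` and `i ≤ k ≤ j` there is a set `S` of vertices of `{0,1}^d`, each of
Hamming weight `k`, of size at most `⌈3d·C(d,k)/C(j-i,k-i)⌉`, such that every comparable pair
`x ≺ y` with `|x| = i`, `|y| = j` has some `v ∈ S` with `x ≼ v ≼ y`. -/
theorem stmt14 (d i j k : ℕ) (hd : 1 ≤ d) (hij : i < j) (hjd : j ≤ d)
    (hik : i ≤ k) (hkj : k ≤ j) :
    ∃ S : Finset (Fin d → Bool),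
      (∀ v ∈ S, hammingWeight v = k) ∧
      S.card ≤ ⌈(3 * d * (d.choose k) : ℝ) / (((j - i).choose (k - i) : ℝ))⌉₊ ∧
      ∀ x y : Fin d → Bool, hammingWeight x = i → hammingWeight y = j →
        cubeLe x y → x ≠ y → ∃ v ∈ S, cubeLe x v ∧ cubeLe v y := by
  classical
  set c : ℕ := (j - i).choose (k - i) with hc_def
  set C : ℕ := d.choose k with hC_def
  set m : ℕ := ⌈(3 * d * C : ℝ) / (c : ℝ)⌉₊ with hm_def
  have hc : 0 < c := Nat.choose_pos (Nat.sub_le_sub_right hkj i)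
  have hC : 0 < C := Nat.choose_pos (hkj.trans hjd)
  -- the universe of weight-k sets
  set U : Finset (Finset (Fin d)) := Finset.univ.powersetCard k with hU_def
  have hUcard : U.card = C := by
    simp [hU_def, Finset.card_powersetCard, hC_def]
  have hUmem : ∀ K : Finset (Fin d), K ∈ U ↔ K.card = k := by
    intro K; simp [hU_def, Finset.mem_powersetCard]
  -- good sets for a pair
  set Good : Finset (Fin d) → Finset (Fin d) → Finset (Finset (Fin d)) :=
    fun A B => U.filter (fun K => A ⊆ K ∧ K ⊆ B) with hGood_def
  have hGoodSub : ∀ A B, Good A B ⊆ U := fun A B => Finset.filter_subset _ _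
  have card_good : ∀ A B : Finset (Fin d), A ⊆ B → A.card = i → B.card = j →
      (Good A B).card = c := by
    intro A B hAB hA hB
    have : (Good A B).card = ((B \ A).powersetCard (k - i)).card := by
      apply Finset.card_bij' (fun K _ => K \ A) (fun T _ => A ∪ T)
      · intro K hK
        simp only [hGood_def, Finset.mem_filter, hUmem] at hK
        rw [Finset.mem_powersetCard]
        exact ⟨Finset.sdiff_subset_sdiff hK.2.2 (le_refl A),
          by rw [Finset.card_sdiff_of_subset hK.2.1, hK.1, hA]⟩
      · intro T hT
        rw [Finset.mem_powersetCard] at hT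
        have hdisj : Disjoint A T := by
          have := hT.1
          exact Finset.disjoint_left.mpr fun a haA haT => (Finset.mem_sdiff.mp (this haT)).2 haA
        simp only [hGood_def, Finset.mem_filter, hUmem]
        refine ⟨?_, Finset.subset_union_left, Finset.union_subset hAB
          ((hT.1).trans (Finset.sdiff_subset))⟩
        rw [Finset.card_union_of_disjoint hdisj, hA, hT.2]
        omega
      · intro K hK
        simp only [hGood_def, Finset.mem_filter, hUmem] at hK
        exact Finset.union_sdiff_of_subset hK.2.1
      · intro T hT
        rw [Finset.mem_powersetCard] at hT
        have hdisj : Disjoint A T := by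
          exact Finset.disjoint_left.mpr fun a haA haT => (Finset.mem_sdiff.mp (hT.1 haT)).2 haA
        exact Finset.union_sdiff_cancel_left hdisj
    rw [this, Finset.card_powersetCard, Finset.card_sdiff_of_subset hAB, hA, hB]
  have hcC : c ≤ C := by
    obtain ⟨B, _, hB⟩ := Finset.exists_subset_card_eq (s := (Finset.univ : Finset (Fin d))) (n := j)
      (by simpa using hjd)
    obtain ⟨A, hAB, hA⟩ := Finset.exists_subset_card_eq (s := B) (n := i) (by omega)
    calc c = (Good A B).card := (card_good A B hAB hA hB).symm
    _ ≤ U.card := Finset.card_le_card (hGoodSub A B)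
    _ = C := hUcard
  -- tuples
  set All : Finset (Fin m → Finset (Fin d)) := Fintype.piFinset (fun _ => U) with hAll_def
  set Bad : Finset (Fin d) × Finset (Fin d) → Finset (Fin m → Finset (Fin d)) :=
    fun p => Fintype.piFinset (fun _ => U \ Good p.1 p.2) with hBad_def
  set Pairs : Finset (Finset (Fin d) × Finset (Fin d)) :=
    Finset.univ.filter (fun p => p.1.card = i ∧ p.2.card = j ∧ p.1 ⊆ p.2) with hPairs_def
  have hAllcard : All.card = C ^ m := by
    simp [hAll_def, Fintype.card_piFinset, hUcard]
  have hBadcard : ∀ p ∈ Pairs, (Bad p).card = (C - c) ^ m := by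
    intro p hp
    simp only [hPairs_def, Finset.mem_filter] at hp
    have : (U \ Good p.1 p.2).card = C - c := by
      rw [Finset.card_sdiff_of_subset (hGoodSub _ _), hUcard, card_good p.1 p.2 hp.2.2.2 hp.2.1 hp.2.2.1]
    simp [hBad_def, Fintype.card_piFinset, this]
  have hPairscard : Pairs.card ≤ 4 ^ d := by
    calc Pairs.card ≤ (Finset.univ : Finset (Finset (Fin d) × Finset (Fin d))).card :=
      Finset.card_filter_le _ _
    _ = 2 ^ d * 2 ^ d := by simp [Fintype.card_finset]
    _ ≤ 4 ^ d := by rw [← mul_pow]; norm_num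
  -- key counting inequality
  have hmx : (3 * d : ℝ) ≤ m * ((c : ℝ) / C) := by
    have h1 : (3 * d * C : ℝ) / c ≤ m := Nat.le_ceil _
    have hcR : (0:ℝ) < c := by exact_mod_cast hc
    have hCR : (0:ℝ) < C := by exact_mod_cast hC
    rw [div_le_iff₀ hcR] at h1
    rw [mul_div_assoc', le_div_iff₀ hCR]
    nlinarith
  have hkey : (Pairs.biUnion Bad).card < All.card := by
    have hcR : (0:ℝ) < c := by exact_mod_cast hc
    have hCR : (0:ℝ) < C := by exact_mod_cast hC
    have hx1 : (c:ℝ)/C ≤ 1 := by rw [div_le_one hCR]; exact_mod_cast hcC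
    have main : ((C - c : ℕ) : ℝ) ^ m ≤ (C:ℝ) ^ m * Real.exp (-(3 * d)) := by
      have e1 : ((C - c : ℕ) : ℝ) = (C:ℝ) * (1 - (c:ℝ)/C) := by
        rw [Nat.cast_sub hcC]; field_simp
      have e2 : (1 - (c:ℝ)/C) ^ m ≤ Real.exp (-((c:ℝ)/C)) ^ m := by
        apply pow_le_pow_left₀ (by linarith)
        linarith [Real.add_one_le_exp (-((c:ℝ)/C))]
      have e3 : Real.exp (-((c:ℝ)/C)) ^ m = Real.exp (-(m * ((c:ℝ)/C))) := by
        rw [← Real.exp_nat_mul]; ring_nf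
      have e4 : Real.exp (-(m * ((c:ℝ)/C))) ≤ Real.exp (-(3 * d)) :=
        Real.exp_le_exp.mpr (by linarith)
      calc ((C - c : ℕ) : ℝ) ^ m = (C:ℝ) ^ m * (1 - (c:ℝ)/C) ^ m := by rw [e1, mul_pow]
      _ ≤ (C:ℝ) ^ m * Real.exp (-((c:ℝ)/C)) ^ m := by
          apply mul_le_mul_of_nonneg_left e2 (by positivity)
      _ = (C:ℝ) ^ m * Real.exp (-(m * ((c:ℝ)/C))) := by rw [e3]
      _ ≤ (C:ℝ) ^ m * Real.exp (-(3 * d)) := by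
          apply mul_le_mul_of_nonneg_left e4 (by positivity)
    have hfour : (4:ℝ) ^ d * Real.exp (-(3 * d)) < 1 := by
      have h2 : (2:ℝ) ≤ Real.exp 1 := by linarith [Real.add_one_le_exp (1:ℝ)]
      have h8 : (8:ℝ) ≤ Real.exp 3 := by
        calc (8:ℝ) = 2 ^ 3 := by norm_num
        _ ≤ Real.exp 1 ^ 3 := pow_le_pow_left₀ (by norm_num) h2 3
        _ = Real.exp 3 := by rw [← Real.exp_nat_mul]; norm_num
      have hlt : (4:ℝ) ^ d < Real.exp (3 * d) := by
        rw [show (3:ℝ) * d = (d : ℕ) * (3:ℝ) by push_cast; ring, Real.exp_nat_mul]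
        calc (4:ℝ) ^ d < 8 ^ d := by
              apply pow_lt_pow_left₀ (by norm_num) (by norm_num) (by omega)
        _ ≤ Real.exp 3 ^ d := pow_le_pow_left₀ (by norm_num) h8 d
      rw [Real.exp_neg, mul_inv_lt_iff₀ (Real.exp_pos _)]
      linarith
    have cast_lt : ((Pairs.biUnion Bad).card : ℝ) < (All.card : ℝ) := by
      calc ((Pairs.biUnion Bad).card : ℝ) ≤ ∑ p ∈ Pairs, ((Bad p).card : ℝ) := by
            exact_mod_cast Finset.card_biUnion_le
      _ = ∑ p ∈ Pairs, ((C - c : ℕ) : ℝ) ^ m := by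
            apply Finset.sum_congr rfl; intro p hp; rw [hBadcard p hp]; push_cast; ring
      _ = Pairs.card * ((C - c : ℕ) : ℝ) ^ m := by rw [Finset.sum_const, nsmul_eq_mul]
      _ ≤ (4:ℝ) ^ d * ((C:ℝ) ^ m * Real.exp (-(3 * d))) := by
            apply mul_le_mul (by exact_mod_cast hPairscard) main (by positivity) (by positivity)
      _ = (4 ^ d * Real.exp (-(3 * d))) * (C:ℝ) ^ m := by ring
      _ < 1 * (C:ℝ) ^ m := by
            apply mul_lt_mul_of_pos_right hfour (by positivity)
      _ = (All.card : ℝ) := by rw [one_mul, hAllcard]; push_cast; ring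
    exact_mod_cast cast_lt
  -- pick a good tuple
  have hex : ∃ f, f ∈ All ∧ f ∉ Pairs.biUnion Bad := by
    by_contra h
    push_neg at h
    have hsub : All ⊆ Pairs.biUnion Bad := fun f hf => h f hf
    exact absurd (Finset.card_le_card hsub) (by omega)
  obtain ⟨f, hfAll, hfGood⟩ := hex
  -- build S
  set toVec : Finset (Fin d) → (Fin d → Bool) := fun K t => decide (t ∈ K) with htoVec
  refine ⟨(Finset.univ.image f).image toVec, ?_, ?_, ?_⟩
  · intro v hv
    simp only [Finset.mem_image, Finset.mem_univ] at hv
    obtain ⟨K, ⟨t, _, rfl⟩, rfl⟩ := hv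
    have hK : f t ∈ U := Fintype.mem_piFinset.mp hfAll t
    rw [hUmem] at hK
    rw [← hK]
    unfold hammingWeight
    congr 1
    ext a
    simp [htoVec]
  · calc ((Finset.univ.image f).image toVec).card ≤ (Finset.univ.image f).card :=
        Finset.card_image_le
    _ ≤ (Finset.univ : Finset (Fin m)).card := Finset.card_image_le
    _ = m := by simp
  · intro x y hx hy hxy _
    set A : Finset (Fin d) := Finset.univ.filter (fun t => x t = true) with hA_def
    set B : Finset (Fin d) := Finset.univ.filter (fun t => y t = true) with hB_def
    have hABp : (A, B) ∈ Pairs := by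
      simp only [hPairs_def, Finset.mem_filter, Finset.mem_univ, true_and]
      refine ⟨hx, hy, ?_⟩
      intro t ht
      simp only [hA_def, Finset.mem_filter, Finset.mem_univ, true_and] at ht
      simp only [hB_def, Finset.mem_filter, Finset.mem_univ, true_and]
      exact hxy t ht
    have hnot : f ∉ Bad (A, B) := fun hbad =>
      hfGood (Finset.mem_biUnion.mpr ⟨(A, B), hABp, hbad⟩)
    have : ∃ t, f t ∉ U \ Good A B := by
      by_contra h
      push_neg at h
      exact hnot (Fintype.mem_piFinset.mpr h)
    obtain ⟨t, ht⟩ := this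
    have hU' : f t ∈ U := Fintype.mem_piFinset.mp hfAll t
    have hgood : f t ∈ Good A B := by
      by_contra h
      exact ht (Finset.mem_sdiff.mpr ⟨hU', h⟩)
    simp only [hGood_def, Finset.mem_filter] at hgood
    refine ⟨toVec (f t), ?_, ?_, ?_⟩
    · exact Finset.mem_image_of_mem _ (Finset.mem_image_of_mem _ (Finset.mem_univ t))
    · intro a ha
      have : a ∈ A := by simp [hA_def, ha]
      have := hgood.2.1 this
      simp [htoVec, this]
    · intro a ha
      simp only [htoVec, decide_eq_true_eq] at ha
      have := hgood.2.2 ha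
      simpa [hB_def] using this
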